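/- Let b be a nontrivial planar loop in PL_0(V) with 2-dimensional span U, and let x ∈ PL_0(V) be such that the conjugate x · b · x^{-1} is again a planar loop. Then x lies in PL_0(U), i.e., every letter of its minimal representative belongs to U. -/

import Mathlib

/-!
STATEMENT 5: If `b` is a nontrivial planar loop in `PL₀(V)` with 2-dimensional span
`U`, and `x ∈ PL₀(V)` is such that `x · b · x⁻¹` is again a planar loop, then every
letter of the minimal representative of `x` belongs to `U`.
-/

open FreeMonoid

variable (V : Type*) [AddCommGroup V] [Module ℝ V]

/-- The defining relations of `PL₀(V)`. -/
inductive PLRel : FreeMonoid V → FreeMonoid V → Prop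
  | pair (v w : V) (h : ¬ LinearIndependent ℝ ![v, w]) :
      PLRel (of v * of w) (of (v + w))
  | zero : PLRel (of (0 : V)) 1

/-- The group (as a quotient monoid) `PL₀(V)` of piecewise linear paths. -/
abbrev PL0 := (conGen (PLRel V)).Quotient

variable {V}

/-- The quotient map `FMon(V) → PL₀(V)`. -/
abbrev PLmk : FreeMonoid V →* PL0 V := (conGen (PLRel V)).mk'

/-- A minimal word: all letters nonzero, consecutive letters linearly independent. -/
def IsMinWord (l : List V) : Prop :=
  (∀ v ∈ l, v ≠ 0) ∧ l.Chain' (fun v w => LinearIndependent ℝ ![v, w])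

/-- The word representing the inverse path: reverse the word and negate each letter. -/
def invWord (l : List V) : List V := l.reverse.map (fun v => -v)


section Lemmas
variable {V : Type*} [AddCommGroup V] [Module ℝ V]

lemma not_indep_iff (v w : V) :
    ¬ LinearIndependent ℝ ![v, w] ↔ v ∈ Submodule.span ℝ {w} ∨ w ∈ Submodule.span ℝ {v} := by
  rw [LinearIndependent.pair_iff]
  constructor
  · intro h
    push_neg at h
    obtain ⟨s, t, hst, hne⟩ := h
    by_cases hs : s = 0
    · subst hs
      have ht : t ≠ 0 := by tauto
      right
      rw [Submodule.mem_span_singleton]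
      have : w = 0 := by
        have := hst; simp at this
        rcases this with h | h
        · exact absurd h ht
        · exact h
      exact ⟨0, by simp [this]⟩
    · left
      rw [Submodule.mem_span_singleton]
      refine ⟨-s⁻¹ * t, ?_⟩
      have h1 : t • w = -(s • v) := by linear_combination (norm := module) hst
      rw [mul_smul, h1, smul_neg, neg_smul, neg_neg, ← mul_smul, inv_mul_cancel₀ hs, one_smul]
  · rintro (h | h) h2 <;> rw [Submodule.mem_span_singleton] at h <;> obtain ⟨c, hc⟩ := h
    · have := h2 1 (-c) (by rw [← hc]; module)
      exact one_ne_zero this.1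
    · have := h2 (-c) 1 (by rw [← hc]; module)
      exact one_ne_zero this.2

lemma indep_ne_zero {v w : V} (h : LinearIndependent ℝ ![v, w]) : v ≠ 0 ∧ w ≠ 0 :=
  ⟨h.ne_zero 0, h.ne_zero 1⟩

lemma mem_span_of_not_indep {v w : V} (h : ¬ LinearIndependent ℝ ![v, w]) (hw : w ≠ 0) :
    v ∈ Submodule.span ℝ {w} := by
  rw [not_indep_iff] at h
  rcases h with h | h
  · exact h
  · rw [Submodule.mem_span_singleton] at h ⊢
    obtain ⟨c, hc⟩ := h
    have hc0 : c ≠ 0 := by rintro rfl; simp at hc; exact hw hc.symm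
    exact ⟨c⁻¹, by rw [← hc, ← mul_smul]; field_simp; exact one_smul ℝ v⟩

lemma not_indep_of_mem_span {x y w : V} (hx : x ∈ Submodule.span ℝ {w})
    (hy : y ∈ Submodule.span ℝ {w}) : ¬ LinearIndependent ℝ ![x, y] := by
  rw [not_indep_iff]
  rw [Submodule.mem_span_singleton] at hx hy
  obtain ⟨a, ha⟩ := hx; obtain ⟨b, hb⟩ := hy
  by_cases hb0 : b = 0
  · right; rw [Submodule.mem_span_singleton]; exact ⟨0, by simp [← hb, hb0]⟩
  · left; rw [Submodule.mem_span_singleton]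
    refine ⟨a * b⁻¹, ?_⟩
    rw [← hb, ← mul_smul, mul_assoc, inv_mul_cancel₀ hb0, mul_one, ha]

lemma not_indep_symm {v w : V} (h : ¬ LinearIndependent ℝ ![v, w]) :
    ¬ LinearIndependent ℝ ![w, v] := by
  rw [not_indep_iff] at h ⊢; tauto

lemma indep_smul_left {u s : V} (h : LinearIndependent ℝ ![u, s]) {c : ℝ} (hc : c ≠ 0) :
    LinearIndependent ℝ ![c • u, s] := by
  rw [LinearIndependent.pair_iff] at h ⊢
  intro a b hab
  rw [smul_smul] at hab
  obtain ⟨h1, h2⟩ := h (a * c) b hab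
  rcases mul_eq_zero.mp h1 with h | h
  · exact ⟨h, h2⟩
  · exact absurd h hc

lemma indep_of_mem_span_indep {u s x : V} (h : LinearIndependent ℝ ![u, s])
    (hx : x ∈ Submodule.span ℝ {u}) (hx0 : x ≠ 0) : LinearIndependent ℝ ![x, s] := by
  rw [Submodule.mem_span_singleton] at hx
  obtain ⟨c, hc⟩ := hx
  have hc0 : c ≠ 0 := by rintro rfl; simp at hc; exact hx0 hc.symm
  rw [← hc]; exact indep_smul_left h hc0

lemma indep_neg_neg {v w : V} (h : LinearIndependent ℝ ![v, w]) :
    LinearIndependent ℝ ![-w, -v] := by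
  by_contra hc
  rw [not_indep_iff] at hc
  have : ¬ LinearIndependent ℝ ![v, w] := by
    rw [not_indep_iff]
    have e : ∀ a b : V, -a ∈ Submodule.span ℝ {-b} → a ∈ Submodule.span ℝ {b} := by
      intro a b hab
      rw [Submodule.mem_span_singleton] at hab ⊢
      obtain ⟨c, hcc⟩ := hab
      exact ⟨c, by have := congrArg Neg.neg hcc; simpa using this⟩
    rcases hc with h' | h'
    · right; exact e _ _ h'
    · left; exact e _ _ h'
  exact this h

open scoped Classical in
noncomputable def redCons : V → List V → List V
  | v, [] => if v = 0 then [] else [v]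
  | v, w :: t => if v = 0 then w :: t
      else if LinearIndependent ℝ ![v, w] then v :: w :: t else redCons (v + w) t

open scoped Classical in
lemma redCons_nil (v : V) : redCons v [] = if v = 0 then [] else [v] := by rw [redCons]

open scoped Classical in
lemma redCons_cons (v w : V) (t : List V) :
    redCons v (w :: t) = if v = 0 then w :: t
      else if LinearIndependent ℝ ![v, w] then v :: w :: t else redCons (v + w) t := by
  rw [redCons]

lemma redCons_zero (l : List V) : redCons (0 : V) l = l := by
  cases l with
  | nil => rw [redCons_nil, if_pos rfl]
  | cons w t => rw [redCons_cons, if_pos rfl]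

lemma redCons_nil_ne (v : V) (hv : v ≠ 0) : redCons v [] = [v] := by
  rw [redCons_nil, if_neg hv]

lemma redCons_cons_indep {v w : V} (t : List V) (h : LinearIndependent ℝ ![v, w]) :
    redCons v (w :: t) = v :: w :: t := by
  rw [redCons_cons, if_neg (indep_ne_zero h).1, if_pos h]

lemma redCons_cons_dep {v w : V} (t : List V) (hv : v ≠ 0)
    (h : ¬ LinearIndependent ℝ ![v, w]) :
    redCons v (w :: t) = redCons (v + w) t := by
  rw [redCons_cons, if_neg hv, if_neg h]

/-- redCons of a cons of a minimal word fixes it. -/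
lemma redCons_min {v : V} {t : List V} (h : IsMinWord (v :: t)) : redCons v t = v :: t := by
  have hv : v ≠ 0 := h.1 v (by simp)
  cases t with
  | nil => exact redCons_nil_ne v hv
  | cons w t' =>
    have : LinearIndependent ℝ ![v, w] := (List.isChain_cons_cons.mp h.2).1
    exact redCons_cons_indep _ this

lemma isMinWord_nil : IsMinWord ([] : List V) := ⟨by simp, List.isChain_nil⟩

lemma isMinWord_tail {v : V} {t : List V} (h : IsMinWord (v :: t)) : IsMinWord t :=
  ⟨fun u hu => h.1 u (by simp [hu]), (List.isChain_cons.mp h.2).2⟩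

lemma isMinWord_redCons (v : V) {l : List V} (h : IsMinWord l) : IsMinWord (redCons v l) := by
  induction l generalizing v with
  | nil =>
    rw [redCons_nil]
    split_ifs with h0
    · exact isMinWord_nil
    · exact ⟨by simpa using h0, List.isChain_singleton _⟩
  | cons w t ih =>
    by_cases h0 : v = 0
    · subst h0; rw [redCons_zero]; exact h
    by_cases hi : LinearIndependent ℝ ![v, w]
    · rw [redCons_cons_indep _ hi]
      refine ⟨?_, List.isChain_cons_cons.mpr ⟨hi, h.2⟩⟩
      intro u hu
      rcases List.mem_cons.mp hu with rfl | hu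
      · exact (indep_ne_zero hi).1
      · exact h.1 u hu
    · rw [redCons_cons_dep _ h0 hi]
      exact ih _ (isMinWord_tail h)

/-- The key absorption lemma. -/
lemma redCons_redCons {v w : V} (h : ¬ LinearIndependent ℝ ![v, w]) {m : List V}
    (hm : IsMinWord m) : redCons v (redCons w m) = redCons (v + w) m := by
  by_cases hv : v = 0
  · subst hv; rw [redCons_zero, zero_add]
  by_cases hw : w = 0
  · subst hw; rw [redCons_zero, add_zero]
  -- v, w ≠ 0, dependent: v ∈ span w, w ∈ span v
  have hvw : v ∈ Submodule.span ℝ {w} := mem_span_of_not_indep h hw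
  have hwv : w ∈ Submodule.span ℝ {v} := mem_span_of_not_indep (not_indep_symm h) hv
  cases m with
  | nil =>
    rw [redCons_nil_ne w hw, redCons_cons, if_neg hv, if_neg h, redCons_nil]
  | cons u t =>
    have hu : u ≠ 0 := hm.1 u (by simp)
    -- both sides equal redCons (v + w + u) t
    by_cases hwu : LinearIndependent ℝ ![w, u]
    · -- w indep u
      rw [redCons_cons_indep _ hwu, redCons_cons_dep _ hv h]
    · -- w dep u : everything in span w
      have huw : u ∈ Submodule.span ℝ {w} := mem_span_of_not_indep (not_indep_symm hwu) hw
      have hRHS : redCons (v + w) (u :: t) = redCons (v + w + u) t := by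
        by_cases hvw0 : v + w = 0
        · rw [hvw0, redCons_zero, zero_add]
          exact (redCons_min ⟨hm.1, hm.2⟩).symm
        · refine redCons_cons_dep _ hvw0 ?_
          exact not_indep_of_mem_span (Submodule.add_mem _ hvw (Submodule.mem_span_singleton_self w)) huw
      rw [hRHS]
      rw [redCons_cons_dep _ hw hwu]
      have hw_mem : w ∈ Submodule.span ℝ {w} := Submodule.mem_span_singleton_self w
      by_cases hwu0 : w + u = 0
      · rw [hwu0, redCons_zero, add_assoc, hwu0, add_zero]
      · have hwu_mem : w + u ∈ Submodule.span ℝ {w} := Submodule.add_mem _ hw_mem huw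
        have hdep : ¬ LinearIndependent ℝ ![v, w + u] := not_indep_of_mem_span hvw hwu_mem
        cases t with
        | nil =>
          rw [redCons_nil_ne _ hwu0, redCons_cons_dep _ hv hdep, add_assoc]
        | cons s t' =>
          have hus : LinearIndependent ℝ ![u, s] := (List.isChain_cons_cons.mp hm.2).1
          have hwu_u : w + u ∈ Submodule.span ℝ {u} :=
            Submodule.add_mem _ (mem_span_of_not_indep hwu hu) (Submodule.mem_span_singleton_self u)
          have : LinearIndependent ℝ ![w + u, s] := indep_of_mem_span_indep hus hwu_u hwu0
          rw [redCons_cons_indep _ this, redCons_cons_dep _ hv hdep, add_assoc]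

/-- Normal form of a word. -/
noncomputable def normW (l : List V) : List V := l.foldr redCons []

lemma isMinWord_foldr {m : List V} (hm : IsMinWord m) (l : List V) :
    IsMinWord (List.foldr redCons m l) := by
  induction l with
  | nil => exact hm
  | cons v t ih => exact isMinWord_redCons v ih

lemma isMinWord_normW (l : List V) : IsMinWord (normW l) := isMinWord_foldr isMinWord_nil l

/-- `(redCons v n) ⋆ m = redCons v (n ⋆ m)` for minimal `n`, `m`. -/
lemma foldr_redCons (v : V) {n m : List V} (hn : IsMinWord n) (hm : IsMinWord m) :
    List.foldr redCons m (redCons v n) = redCons v (List.foldr redCons m n) := by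
  induction n generalizing v with
  | nil =>
    rw [redCons_nil]
    split_ifs with h0
    · subst h0; simp [redCons_zero]
    · simp
  | cons w t ih =>
    by_cases h0 : v = 0
    · subst h0; rw [redCons_zero, redCons_zero]
    by_cases hi : LinearIndependent ℝ ![v, w]
    · rw [redCons_cons_indep _ hi]; rfl
    · rw [redCons_cons_dep _ h0 hi, ih _ (isMinWord_tail hn)]
      show redCons (v + w) _ = redCons v (redCons w _)
      rw [redCons_redCons hi (isMinWord_foldr hm t)]

/-- folding over a word is the same as folding over its normal form. -/
lemma foldr_eq_foldr_normW (a : List V) {m : List V} (hm : IsMinWord m) :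
    List.foldr redCons m a = List.foldr redCons m (normW a) := by
  induction a with
  | nil => rfl
  | cons v t ih =>
    show redCons v _ = _
    rw [ih, show normW (v :: t) = redCons v (normW t) from rfl,
      foldr_redCons v (isMinWord_normW t) hm]

lemma normW_append (a b : List V) :
    normW (a ++ b) = List.foldr redCons (normW b) a := by
  unfold normW; rw [List.foldr_append]

lemma normW_append' (a b : List V) :
    normW (a ++ b) = List.foldr redCons (normW b) (normW a) := by
  rw [normW_append, foldr_eq_foldr_normW a (isMinWord_normW b)]

lemma normW_min {l : List V} (h : IsMinWord l) : normW l = l := by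
  induction l with
  | nil => rfl
  | cons v t ih =>
    show redCons v (normW t) = v :: t
    rw [ih (isMinWord_tail h), redCons_min h]

/-- The congruence of equal normal forms. -/
noncomputable def normCon : Con (FreeMonoid V) where
  r a b := normW a.toList = normW b.toList
  iseqv := ⟨fun _ => rfl, Eq.symm, Eq.trans⟩
  mul' {a b c d} h1 h2 := by
    show normW ((a * c).toList) = normW ((b * d).toList)
    rw [FreeMonoid.toList_mul, FreeMonoid.toList_mul]
    show normW (a.toList ++ c.toList) = normW (b.toList ++ d.toList)
    rw [normW_append', normW_append', h1, h2]

lemma normW_eq_of_PLmk_eq {a b : FreeMonoid V} (h : PLmk a = PLmk b) :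
    normW a.toList = normW b.toList := by
  have hle : conGen (PLRel V) ≤ normCon := by
    apply Con.conGen_le.mpr
    rintro x y (⟨v, w, hvw⟩ | _)
    · show normW ((of v * of w).toList) = normW ((of (v + w)).toList)
      show normW [v, w] = normW [v + w]
      show redCons v (redCons w []) = redCons (v + w) []
      rw [redCons_redCons hvw isMinWord_nil]
    · show normW ((of (0 : V)).toList) = normW ((1 : FreeMonoid V).toList)
      show normW [(0 : V)] = normW []
      show redCons (0 : V) [] = []
      rw [redCons_zero]
  exact hle ((Con.eq _).mp h)

lemma sum_redCons (v : V) (l : List V) : (redCons v l).sum = v + l.sum := by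
  induction l generalizing v with
  | nil =>
    rw [redCons_nil]; split_ifs with h0 <;> simp [h0]
  | cons w t ih =>
    by_cases h0 : v = 0
    · subst h0; rw [redCons_zero, zero_add]
    by_cases hi : LinearIndependent ℝ ![v, w]
    · rw [redCons_cons_indep _ hi, List.sum_cons]
    · rw [redCons_cons_dep _ h0 hi, ih, List.sum_cons, add_assoc]

lemma sum_normW (l : List V) : (normW l).sum = l.sum := by
  induction l with
  | nil => rfl
  | cons v t ih => show (redCons v (normW t)).sum = _; rw [sum_redCons, ih, List.sum_cons]

lemma invWord_sum (l : List V) : (invWord l).sum = -l.sum := by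
  have key : ∀ t : List V, (t.map (fun v => -v)).sum = -t.sum := by
    intro t
    induction t with
    | nil => simp
    | cons v t ih => simp [ih]; abel
  rw [show invWord l = (l.reverse).map (fun v => -v) from rfl, key, List.sum_reverse]

/-- letters of `redCons v l` lie in the span of `v` and the letters of `l`. -/
lemma mem_span_redCons (v : V) (l : List V) :
    ∀ u ∈ redCons v l, u ∈ Submodule.span ℝ (insert v {x | x ∈ l}) := by
  induction l generalizing v with
  | nil =>
    rw [redCons_nil]
    split_ifs with h0
    · simp
    · intro u hu
      simp only [List.mem_singleton] at hu
      subst hu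
      exact Submodule.subset_span (by simp)
  | cons w t ih =>
    by_cases h0 : v = 0
    · subst h0; rw [redCons_zero]
      intro u hu
      exact Submodule.subset_span (by simp_all)
    by_cases hi : LinearIndependent ℝ ![v, w]
    · rw [redCons_cons_indep _ hi]
      intro u hu
      exact Submodule.subset_span (by simp_all)
    · rw [redCons_cons_dep _ h0 hi]
      intro u hu
      have := ih (v + w) u hu
      refine Submodule.span_le.mpr ?_ this
      intro y hy
      rcases hy with rfl | hy
      · exact Submodule.add_mem _ (Submodule.subset_span (by simp))
          (Submodule.subset_span (by simp))
      · exact Submodule.subset_span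
          (by right; simp only [Set.mem_setOf_eq, List.mem_cons]; exact Or.inr hy)

lemma mem_span_normW (l : List V) :
    ∀ u ∈ normW l, u ∈ Submodule.span ℝ {x | x ∈ l} := by
  induction l with
  | nil => simp [normW]
  | cons v t ih =>
    intro u hu
    have := mem_span_redCons v (normW t) u hu
    refine Submodule.span_le.mpr ?_ this
    intro y hy
    rcases hy with rfl | hy
    · exact Submodule.subset_span (by simp)
    · exact Submodule.span_le.mpr
        (fun z hz => Submodule.subset_span (by right; exact hz)) (ih y hy)

lemma foldr_neg_cancel (v : V) {m : List V} (hm : IsMinWord m) :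
    redCons (-v) (redCons v m) = m := by
  have : ¬ LinearIndependent ℝ ![-v, v] := by
    rw [not_indep_iff]
    left
    rw [Submodule.mem_span_singleton]
    exact ⟨-1, by simp⟩
  rw [redCons_redCons this hm, neg_add_cancel, redCons_zero]

lemma normW_inv_cancel (l : List V) (r : List V) :
    normW (invWord l ++ (l ++ r)) = normW r := by
  induction l generalizing r with
  | nil => simp [invWord]
  | cons v t ih =>
    have e2 : invWord (v :: t) ++ ((v :: t) ++ r) = invWord t ++ ([-v, v] ++ (t ++ r)) := by
      simp [invWord]
    rw [e2, normW_append]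
    have e3 : normW ([-v, v] ++ (t ++ r)) = normW (t ++ r) := by
      rw [normW_append]
      show redCons (-v) (redCons v (normW (t ++ r))) = _
      exact foldr_neg_cancel v (isMinWord_normW _)
    rw [e3, ← normW_append, ih r]

/-- replacement of congruent subwords. -/
lemma normW_replace {a a' : List V} (h : normW a = normW a') (x y : List V) :
    normW (x ++ (a ++ y)) = normW (x ++ (a' ++ y)) := by
  rw [normW_append x (a ++ y), normW_append x (a' ++ y), normW_append' a y, normW_append' a' y, h]

lemma isMinWord_append_left {a b : List V} (h : IsMinWord (a ++ b)) : IsMinWord a :=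
  ⟨fun v hv => h.1 v (by simp [hv]), (List.isChain_append.mp h.2).1⟩

lemma isMinWord_invWord {l : List V} (h : IsMinWord l) : IsMinWord (invWord l) := by
  constructor
  · intro v hv
    simp only [invWord, List.mem_map, List.mem_reverse] at hv
    obtain ⟨x, hx, rfl⟩ := hv
    simpa using h.1 x hx
  · show List.IsChain _ (List.map _ l.reverse)
    rw [List.isChain_map, List.isChain_reverse]
    exact h.2.imp fun {a b} hab => indep_neg_neg hab

lemma invWord_concat (p : List V) (v : V) : invWord (p ++ [v]) = -v :: invWord p := by
  simp [invWord]

lemma exists_split (P : V → Prop) : ∀ (l : List V), (¬ ∀ v ∈ l, P v) →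
    ∃ p v q, l = p ++ v :: q ∧ ¬ P v ∧ ∀ u ∈ q, P u := by
  intro l
  induction l using List.reverseRecOn with
  | nil => intro h; exact absurd (by simp) h
  | append_singleton t a ih =>
    intro h
    by_cases ha : P a
    · have h' : ¬ ∀ v ∈ t, P v := by
        intro hall
        refine h ?_
        intro v hv
        rcases List.mem_append.mp hv with h1 | h1
        · exact hall v h1
        · simp only [List.mem_singleton] at h1; subst h1; exact ha
      obtain ⟨p, v, q, rfl, hv, hq⟩ := ih h'
      refine ⟨p, v, q ++ [a], by simp, hv, ?_⟩
      intro u hu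
      rcases List.mem_append.mp hu with h1 | h1
      · exact hq u h1
      · simp only [List.mem_singleton] at h1; subst h1; exact ha
    · exact ⟨t, a, [], by simp, ha, by simp⟩

end Lemmas

theorem tail_of_planar_conjugate_is_planar [FiniteDimensional ℝ V]
    (lb lx : List V)
    -- `b` is a nontrivial planar loop with 2-dimensional span `U = span lb`:
    (hbmin : IsMinWord lb) (hbsum : lb.sum = 0)
    (hb2 : Module.finrank ℝ (Submodule.span ℝ {v | v ∈ lb}) = 2)
    -- `lx` is the minimal representative of `x`:
    (hxmin : IsMinWord lx)
    -- `x · b · x⁻¹` is a planar loop: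
    (hconj : ∃ m : List V, IsMinWord m ∧ m.sum = 0 ∧
        Module.finrank ℝ (Submodule.span ℝ {v | v ∈ m}) ≤ 2 ∧
        PLmk (FreeMonoid.ofList m) =
          PLmk (FreeMonoid.ofList (lx ++ lb ++ invWord lx))) :
    ∀ v ∈ lx, v ∈ Submodule.span ℝ {u | u ∈ lb} := by
  -- lb is nonempty
  have hlbne : lb ≠ [] := by
    rintro rfl
    have h0 : {v : V | v ∈ ([] : List V)} = (∅ : Set V) := by
      ext y; simp
    rw [h0, Submodule.span_empty, finrank_bot] at hb2
    exact two_ne_zero hb2.symm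
  set U : Submodule ℝ V := Submodule.span ℝ {u | u ∈ lb} with hU
  by_contra hcon
  obtain ⟨p, v, q, hlx, hv, hq⟩ := exists_split (· ∈ U) lx hcon
  obtain ⟨m, hmmin, hmsum, hmrk, hmeq⟩ := hconj
  -- setup
  set p' : List V := p ++ [v] with hp'
  have hlx' : lx = p' ++ q := by rw [hlx, hp']; simp
  set A : List V := q ++ (lb ++ invWord q) with hA
  set c : List V := normW A with hc
  have hcmin : IsMinWord c := isMinWord_normW A
  -- m = normW of the concatenation
  have hnorm : m = normW (lx ++ lb ++ invWord lx) := by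
    have := normW_eq_of_PLmk_eq hmeq
    rwa [FreeMonoid.toList_ofList, FreeMonoid.toList_ofList, normW_min hmmin] at this
  -- rewrite the concatenation
  have hconcat : lx ++ lb ++ invWord lx = p' ++ (A ++ invWord p') := by
    rw [hlx', hA, show invWord (p' ++ q) = invWord q ++ invWord p' by simp [invWord]]
    simp
  -- m = normW (p' ++ (c ++ invWord p'))
  have hm2 : m = normW (p' ++ (c ++ invWord p')) := by
    rw [hnorm, hconcat]
    exact normW_replace (by rw [hc, normW_min (isMinWord_normW A)]) p' (invWord p')
  -- c is nonempty
  have hcne : c ≠ [] := by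
    intro hnil
    have h1 : normW (invWord q ++ (A ++ q)) = normW (invWord q ++ ([] ++ q)) :=
      normW_replace (by rw [← hc, hnil]; rfl) (invWord q) q
    have h2 : normW (invWord q ++ (A ++ q)) = lb := by
      have e : invWord q ++ (A ++ q) = invWord q ++ (q ++ (lb ++ (invWord q ++ q))) := by
        rw [hA]; simp
      rw [e, normW_inv_cancel]
      have h4 : normW (lb ++ (invWord q ++ q)) = normW lb := by
        have := normW_replace (a := invWord q ++ (q ++ [])) (a' := ([] : List V))
          (by rw [normW_inv_cancel]) lb []
        simpa using this
      rw [h4, normW_min hbmin]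
    have h3 : normW (invWord q ++ ([] ++ q)) = [] := by
      have e : invWord q ++ ([] ++ q) = invWord q ++ (q ++ []) := by simp
      rw [e, normW_inv_cancel]
      rfl
    exact hlbne (by rw [← h2, h1, h3])
  -- letters of c lie in U
  have hcU : ∀ u ∈ c, u ∈ U := by
    intro u hu
    have h1 := mem_span_normW A u hu
    refine Submodule.span_le.mpr ?_ h1
    intro y hy
    simp only [hA, Set.mem_setOf_eq, List.mem_append] at hy
    rcases hy with hy | hy | hy
    · exact hq y hy
    · exact Submodule.subset_span hy
    · simp only [invWord, List.mem_map, List.mem_reverse] at hy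
      obtain ⟨x, hx, rfl⟩ := hy
      exact neg_mem (hq x hx)
  -- sum of c is zero
  have hcsum : c.sum = 0 := by
    rw [hc, sum_normW, hA]
    simp [invWord_sum, hbsum]
  -- c has at least two letters
  obtain ⟨c0, t0, hcc⟩ := List.exists_cons_of_ne_nil hcne
  obtain ⟨c1, c', rfl⟩ : ∃ c1 c', t0 = c1 :: c' := by
    cases t0 with
    | nil =>
      exfalso
      have h0 : c0 ≠ 0 := hcmin.1 c0 (by rw [hcc]; simp)
      rw [hcc] at hcsum
      simp at hcsum
      exact h0 hcsum
    | cons c1 c' => exact ⟨c1, c', rfl⟩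
  have hc01 : LinearIndependent ℝ ![c0, c1] := by
    have h5 := hcmin.2
    rw [hcc] at h5
    exact (List.isChain_cons_cons.mp h5).1
  -- the word D := p' ++ (c ++ invWord p') is minimal
  have hp'min : IsMinWord p' := by
    have h6 : IsMinWord (p' ++ q) := by rw [← hlx']; exact hxmin
    exact isMinWord_append_left h6
  have hDmin : IsMinWord (p' ++ (c ++ invWord p')) := by
    constructor
    · intro u hu
      rcases List.mem_append.mp hu with h1 | h1
      · exact hp'min.1 u h1
      rcases List.mem_append.mp h1 with h1 | h1
      · exact hcmin.1 u h1
      · exact (isMinWord_invWord hp'min).1 u h1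
    · show List.IsChain _ _; rw [List.isChain_append]
      refine ⟨hp'min.2, ?_, ?_⟩
      · rw [List.isChain_append]
        refine ⟨hcmin.2, (isMinWord_invWord hp'min).2, ?_⟩
        -- junction c / invWord p'
        intro x hx y hy
        rw [hp', invWord_concat, List.head?_cons] at hy
        injection hy with hy; subst hy
        have hxc : x ∈ c := List.mem_of_mem_getLast? hx
        by_contra hdep
        apply hv
        have hx0 : x ≠ 0 := hcmin.1 x hxc
        have : -v ∈ Submodule.span ℝ {x} := mem_span_of_not_indep (not_indep_symm hdep) hx0
        have hxU : Submodule.span ℝ {x} ≤ U := by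
          rw [Submodule.span_le, Set.singleton_subset_iff]
          exact hcU x hxc
        have := hxU this
        simpa using neg_mem this
      · -- junction p' / c
        intro x hx y hy
        rw [hp', List.getLast?_concat] at hx
        have hxv : x = v := by simpa [eq_comm] using hx
        subst hxv
        rw [List.head?_append_of_ne_nil c hcne] at hy
        have hy' : y ∈ c := List.mem_of_mem_head? hy
        by_contra hdep
        apply hv
        have hy0 : y ≠ 0 := hcmin.1 y hy'
        have h7 : x ∈ Submodule.span ℝ {y} := mem_span_of_not_indep hdep hy0
        have hyU : Submodule.span ℝ {y} ≤ U := by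
          rw [Submodule.span_le, Set.singleton_subset_iff]
          exact hcU y hy'
        exact hyU h7
  -- m is this minimal word
  have hmD : m = p' ++ (c ++ invWord p') := by rw [hm2, normW_min hDmin]
  have hvm : v ∈ m := by rw [hmD, hp']; simp
  set S : Submodule ℝ V := Submodule.span ℝ {x | x ∈ m} with hS
  set W : Submodule ℝ V := Submodule.span ℝ {x | x ∈ c} with hW
  have hWU : W ≤ U := Submodule.span_le.mpr fun y hy => hcU y hy
  have hWS : W ≤ S := by
    rw [hW, Submodule.span_le]
    intro y hy
    apply Submodule.subset_span
    rw [hmD]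
    simp only [Set.mem_setOf_eq, List.mem_append]
    right; left; exact hy
  have h2W : 2 ≤ Module.finrank ℝ W := by
    have hrange : Submodule.span ℝ (Set.range ![c0, c1]) ≤ W := by
      rw [Submodule.span_le]
      rintro y ⟨i, rfl⟩
      apply Submodule.subset_span
      fin_cases i
      · show c0 ∈ {x | x ∈ c}; rw [hcc]; simp
      · show c1 ∈ {x | x ∈ c}; rw [hcc]; simp
    have hcard := finrank_span_eq_card hc01
    simp only [Fintype.card_fin] at hcard
    calc 2 = Module.finrank ℝ (Submodule.span ℝ (Set.range ![c0, c1])) := hcard.symm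
      _ ≤ Module.finrank ℝ W := Submodule.finrank_mono hrange
  have hlt : W < W ⊔ Submodule.span ℝ {v} := by
    refine lt_of_le_of_ne le_sup_left fun he => hv ?_
    have hvsup : v ∈ W ⊔ Submodule.span ℝ {v} :=
      (le_sup_right : Submodule.span ℝ {v} ≤ _) (Submodule.mem_span_singleton_self v)
    rw [← he] at hvsup
    exact hWU hvsup
  have h3 : 3 ≤ Module.finrank ℝ (W ⊔ Submodule.span ℝ {v} : Submodule ℝ V) := by
    have := Submodule.finrank_lt_finrank_of_lt hlt
    omega
  have hsupS : W ⊔ Submodule.span ℝ {v} ≤ S := by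
    refine sup_le hWS ?_
    rw [Submodule.span_le, Set.singleton_subset_iff]
    exact Submodule.subset_span hvm
  have hfinal := Submodule.finrank_mono hsupS
  omega
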